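/- Let n ≥ 4 and let s be a function assigning a rational number s_I to each 4-element subset I of {1,…,n}. Suppose that for every partition of {1,…,n} into four pairwise disjoint nonempty subsets A, B, C, D one has ∑_{I : |I∩A|=|I∩B|=|I∩C|=|I∩D|=1} s_I ≥ 0, where the sum ranges over 4-element subsets I of {1,…,n}. Then for every subset J ⊆ {1,…,n} with 2 ≤ |J| ≤ n−2, one has ∑_{I : |I∩J|=2} s_I ≥ 0, where again the sum ranges over 4-element subsets I of {1,…,n}. -/
import Mathlib


open Finset

/-- For `T ⊆ J` with `|T| = 2`, the number of subsets of `J` meeting `T` in exactly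
one element is `2 ^ (|J| - 1)`. -/
lemma count_sep {α : Type*} [DecidableEq α] (J T : Finset α)
    (hTJ : T ⊆ J) (hT : T.card = 2) :
    (J.powerset.filter (fun A => (A ∩ T).card = 1)).card = 2 ^ (J.card - 1) := by
  have key : (T ×ˢ (J \ T).powerset).card
      = (J.powerset.filter (fun A => (A ∩ T).card = 1)).card := by
    apply Finset.card_bij (fun p _ => insert p.1 p.2)
    · rintro ⟨t, B⟩ hp
      simp only [Finset.mem_product, Finset.mem_powerset] at hp
      obtain ⟨ht, hB⟩ := hp
      have hBT : ∀ x ∈ B, x ∉ T := fun x hx => (Finset.mem_sdiff.mp (hB hx)).2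
      have hins : insert t B ∩ T = {t} := by
        ext x
        simp only [Finset.mem_inter, Finset.mem_insert, Finset.mem_singleton]
        constructor
        · rintro ⟨hx | hx, hxT⟩
          · exact hx
          · exact absurd hxT (hBT x hx)
        · rintro rfl; exact ⟨Or.inl rfl, ht⟩
      simp only [Finset.mem_filter, Finset.mem_powerset]
      refine ⟨Finset.insert_subset (hTJ ht) (hB.trans Finset.sdiff_subset), ?_⟩
      rw [hins, Finset.card_singleton]
    · rintro ⟨t, B⟩ hp ⟨t', B'⟩ hp' heq
      simp only [Finset.mem_product, Finset.mem_powerset] at hp hp'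
      obtain ⟨ht, hB⟩ := hp
      obtain ⟨ht', hB'⟩ := hp'
      have hBT : ∀ x ∈ B, x ∉ T := fun x hx => (Finset.mem_sdiff.mp (hB hx)).2
      have hBT' : ∀ x ∈ B', x ∉ T := fun x hx => (Finset.mem_sdiff.mp (hB' hx)).2
      have htt : t = t' := by
        have h1 : t' ∈ insert t B := heq ▸ Finset.mem_insert_self t' B'
        rcases Finset.mem_insert.mp h1 with h | h
        · exact h.symm
        · exact absurd ht' (hBT t' h)
      subst htt
      have hBB : B = B' := by
        ext x
        constructor
        · intro hx
          have : x ∈ insert t B' := heq ▸ Finset.mem_insert_of_mem hx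
          rcases Finset.mem_insert.mp this with h | h
          · exact absurd (h ▸ ht) (hBT x hx)
          · exact h
        · intro hx
          have : x ∈ insert t B := heq ▸ Finset.mem_insert_of_mem hx
          rcases Finset.mem_insert.mp this with h | h
          · exact absurd (h ▸ ht) (hBT' x hx)
          · exact h
      simp [hBB]
    · intro A hA
      simp only [Finset.mem_filter, Finset.mem_powerset] at hA
      obtain ⟨hAJ, hA1⟩ := hA
      obtain ⟨t, ht⟩ := Finset.card_eq_one.mp hA1
      have htA : t ∈ A := (Finset.mem_inter.mp (ht ▸ Finset.mem_singleton_self t)).1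
      have htT : t ∈ T := (Finset.mem_inter.mp (ht ▸ Finset.mem_singleton_self t)).2
      refine ⟨(t, A \ T), ?_, ?_⟩
      · simp only [Finset.mem_product, Finset.mem_powerset]
        exact ⟨htT, Finset.sdiff_subset_sdiff hAJ le_rfl⟩
      · ext x
        simp only [Finset.mem_insert, Finset.mem_sdiff]
        constructor
        · rintro (rfl | ⟨hx, _⟩)
          · exact htA
          · exact hx
        · intro hx
          by_cases hxT : x ∈ T
          · left
            have : x ∈ A ∩ T := Finset.mem_inter.mpr ⟨hx, hxT⟩
            rw [ht] at this
            exact Finset.mem_singleton.mp this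
          · right; exact ⟨hx, hxT⟩
  have hJ2 : 2 ≤ J.card := hT ▸ Finset.card_le_card hTJ
  rw [← key, Finset.card_product, Finset.card_powerset, Finset.card_sdiff_of_subset hTJ, hT]
  have h1 : J.card - 1 = (J.card - 2) + 1 := by omega
  rw [h1, pow_succ]
  ring

/-- For `A ⊆ J` and `|I ∩ J| = 2`, the F-curve separation condition on the pair
`(A, J \ A)` is equivalent to `A` splitting `I ∩ J`. -/
lemma sep_iff {α : Type*} [DecidableEq α] {I J A : Finset α} (hA : A ⊆ J)
    (h2 : (I ∩ J).card = 2) :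
    ((I ∩ A).card = 1 ∧ (I ∩ (J \ A)).card = 1) ↔ (A ∩ (I ∩ J)).card = 1 := by
  have e1 : I ∩ A = (I ∩ J) ∩ A := by
    rw [inter_assoc, inter_eq_right.mpr hA]
  have e2 : I ∩ (J \ A) = (I ∩ J) \ A := by
    ext x; simp only [mem_inter, mem_sdiff]; tauto
  have e3 : ((I ∩ J) ∩ A).card + ((I ∩ J) \ A).card = (I ∩ J).card :=
    Finset.card_inter_add_card_sdiff _ _
  rw [e1, e2, inter_comm A]
  omega

/-- Fulton's conjecture for the Keel subspace of `N^1(M̄_{0,n})`, combinatorial form: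
if the Keel coordinate vector `s` is F-nef (all intersections with F-curves are
nonnegative), then all boundary coefficients are nonnegative. -/
theorem fulton_keel_subspace (n : ℕ) (hn : 4 ≤ n) (s : Finset (Fin n) → ℚ)
    (hF : ∀ A B C D : Finset (Fin n),
      A.Nonempty → B.Nonempty → C.Nonempty → D.Nonempty →
      Disjoint A B → Disjoint A C → Disjoint A D →
      Disjoint B C → Disjoint B D → Disjoint C D →
      A ∪ B ∪ C ∪ D = univ →
      0 ≤ ∑ I ∈ univ.filter (fun I : Finset (Fin n) =>
            I.card = 4 ∧ (I ∩ A).card = 1 ∧ (I ∩ B).card = 1 ∧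
            (I ∩ C).card = 1 ∧ (I ∩ D).card = 1), s I)
    (J : Finset (Fin n)) (hJ2 : 2 ≤ J.card) (hJn : J.card ≤ n - 2) :
    0 ≤ ∑ I ∈ univ.filter (fun I : Finset (Fin n) =>
          I.card = 4 ∧ (I ∩ J).card = 2), s I := by
  classical
  have hcard : Fintype.card (Fin n) = n := Fintype.card_fin n
  have hcJ : Jᶜ.card = n - J.card := by rw [card_compl, hcard]
  have hJc2 : 2 ≤ Jᶜ.card := by
    rw [hcJ]; omega
  set 𝒜 := J.powerset.filter (fun A => A.Nonempty ∧ (J \ A).Nonempty) with h𝒜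
  set 𝒞 := Jᶜ.powerset.filter (fun C => C.Nonempty ∧ (Jᶜ \ C).Nonempty) with h𝒞
  set c : ℕ := 2 ^ (J.card - 1) * 2 ^ (Jᶜ.card - 1) with hc
  -- Each inner sum is an F-curve sum, hence nonnegative
  have key : ∀ A ∈ 𝒜, ∀ C ∈ 𝒞, 0 ≤ ∑ I ∈ univ.filter (fun I : Finset (Fin n) =>
      I.card = 4 ∧ (I ∩ A).card = 1 ∧ (I ∩ (J \ A)).card = 1 ∧
      (I ∩ C).card = 1 ∧ (I ∩ (Jᶜ \ C)).card = 1), s I := by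
    intro A hA C hC
    simp only [h𝒜, mem_filter, mem_powerset] at hA
    simp only [h𝒞, mem_filter, mem_powerset] at hC
    obtain ⟨hAJ, hAne, hJAne⟩ := hA
    obtain ⟨hCJ, hCne, hJCne⟩ := hC
    have hsubJ : J \ A ⊆ J := sdiff_subset
    have hsubJc : Jᶜ \ C ⊆ Jᶜ := sdiff_subset
    have hJJc : Disjoint J Jᶜ := disjoint_compl_right
    apply hF A (J \ A) C (Jᶜ \ C) hAne hJAne hCne hJCne
    · exact disjoint_sdiff
    · exact hJJc.mono hAJ hCJ
    · exact hJJc.mono hAJ hsubJc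
    · exact hJJc.mono hsubJ hCJ
    · exact hJJc.mono hsubJ hsubJc
    · exact disjoint_sdiff
    · rw [union_sdiff_of_subset hAJ, union_assoc, union_sdiff_of_subset hCJ,
        union_compl]
  have total : 0 ≤ ∑ A ∈ 𝒜, ∑ C ∈ 𝒞, ∑ I ∈ univ.filter (fun I : Finset (Fin n) =>
      I.card = 4 ∧ (I ∩ A).card = 1 ∧ (I ∩ (J \ A)).card = 1 ∧
      (I ∩ C).card = 1 ∧ (I ∩ (Jᶜ \ C)).card = 1), s I :=
    Finset.sum_nonneg fun A hA => Finset.sum_nonneg fun C hC => key A hA C hC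
  -- per-I computation
  have perI : ∀ I : Finset (Fin n),
      (∑ A ∈ 𝒜, ∑ C ∈ 𝒞, if (I.card = 4 ∧ (I ∩ A).card = 1 ∧ (I ∩ (J \ A)).card = 1 ∧
        (I ∩ C).card = 1 ∧ (I ∩ (Jᶜ \ C)).card = 1) then s I else 0)
      = (c : ℚ) * (if I.card = 4 ∧ (I ∩ J).card = 2 then s I else 0) := by
    intro I
    by_cases hI : I.card = 4 ∧ (I ∩ J).card = 2
    · obtain ⟨h4, h2⟩ := hI
      have h2' : (I ∩ Jᶜ).card = 2 := by
        have e : I ∩ Jᶜ = I \ J := by rw [← Finset.sdiff_eq_inter_compl]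
        have := Finset.card_inter_add_card_sdiff I J
        rw [e]; omega
      -- rewrite conditions
      have step1 : (∑ A ∈ 𝒜, ∑ C ∈ 𝒞, if (I.card = 4 ∧ (I ∩ A).card = 1 ∧
            (I ∩ (J \ A)).card = 1 ∧ (I ∩ C).card = 1 ∧ (I ∩ (Jᶜ \ C)).card = 1)
            then s I else 0)
          = ∑ A ∈ 𝒜, ∑ C ∈ 𝒞, if ((A ∩ (I ∩ J)).card = 1) then
              (if ((C ∩ (I ∩ Jᶜ)).card = 1) then s I else 0) else 0 := by
        refine Finset.sum_congr rfl fun A hA => Finset.sum_congr rfl fun C hC => ?_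
        simp only [h𝒜, mem_filter, mem_powerset] at hA
        simp only [h𝒞, mem_filter, mem_powerset] at hC
        have hcond : (I.card = 4 ∧ (I ∩ A).card = 1 ∧ (I ∩ (J \ A)).card = 1 ∧
            (I ∩ C).card = 1 ∧ (I ∩ (Jᶜ \ C)).card = 1)
            ↔ ((A ∩ (I ∩ J)).card = 1 ∧ (C ∩ (I ∩ Jᶜ)).card = 1) := by
          constructor
          · rintro ⟨_, a1, a2, c1, c2⟩
            exact ⟨(sep_iff hA.1 h2).mp ⟨a1, a2⟩, (sep_iff hC.1 h2').mp ⟨c1, c2⟩⟩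
          · rintro ⟨ha, hc⟩
            obtain ⟨a1, a2⟩ := (sep_iff hA.1 h2).mpr ha
            obtain ⟨c1, c2⟩ := (sep_iff hC.1 h2').mpr hc
            exact ⟨h4, a1, a2, c1, c2⟩
        rw [if_congr hcond rfl rfl, ite_and]
      rw [step1]
      have hAcount : (𝒜.filter (fun A => (A ∩ (I ∩ J)).card = 1)).card
          = 2 ^ (J.card - 1) := by
        have heq : 𝒜.filter (fun A => (A ∩ (I ∩ J)).card = 1)
            = J.powerset.filter (fun A => (A ∩ (I ∩ J)).card = 1) := by
          ext A
          simp only [h𝒜, mem_filter, mem_powerset]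
          constructor
          · tauto
          · rintro ⟨hAJ, h1⟩
            refine ⟨⟨hAJ, ?_, ?_⟩, h1⟩
            · have : (A ∩ (I ∩ J)).Nonempty := Finset.card_pos.mp (by omega)
              exact this.mono inter_subset_left
            · have e : (I ∩ J) \ A ⊆ J \ A :=
                Finset.sdiff_subset_sdiff inter_subset_right le_rfl
              have hcd : ((I ∩ J) ∩ A).card + ((I ∩ J) \ A).card = (I ∩ J).card :=
                Finset.card_inter_add_card_sdiff _ _
              rw [inter_comm] at hcd
              have : ((I ∩ J) \ A).Nonempty := Finset.card_pos.mp (by omega)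
              exact this.mono e
        rw [heq]
        exact count_sep J (I ∩ J) inter_subset_right h2
      have hCcount : (𝒞.filter (fun C => (C ∩ (I ∩ Jᶜ)).card = 1)).card
          = 2 ^ (Jᶜ.card - 1) := by
        have heq : 𝒞.filter (fun C => (C ∩ (I ∩ Jᶜ)).card = 1)
            = Jᶜ.powerset.filter (fun C => (C ∩ (I ∩ Jᶜ)).card = 1) := by
          ext C
          simp only [h𝒞, mem_filter, mem_powerset]
          constructor
          · tauto
          · rintro ⟨hCJ, h1⟩
            refine ⟨⟨hCJ, ?_, ?_⟩, h1⟩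
            · have : (C ∩ (I ∩ Jᶜ)).Nonempty := Finset.card_pos.mp (by omega)
              exact this.mono inter_subset_left
            · have e : (I ∩ Jᶜ) \ C ⊆ Jᶜ \ C :=
                Finset.sdiff_subset_sdiff inter_subset_right le_rfl
              have hcd : ((I ∩ Jᶜ) ∩ C).card + ((I ∩ Jᶜ) \ C).card = (I ∩ Jᶜ).card :=
                Finset.card_inter_add_card_sdiff _ _
              rw [inter_comm] at hcd
              have : ((I ∩ Jᶜ) \ C).Nonempty := Finset.card_pos.mp (by omega)
              exact this.mono e
        rw [heq]
        exact count_sep Jᶜ (I ∩ Jᶜ) inter_subset_right h2'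
      calc (∑ A ∈ 𝒜, ∑ C ∈ 𝒞, if ((A ∩ (I ∩ J)).card = 1) then
              (if ((C ∩ (I ∩ Jᶜ)).card = 1) then s I else 0) else 0)
          = ∑ A ∈ 𝒜.filter (fun A => (A ∩ (I ∩ J)).card = 1),
              ∑ C ∈ 𝒞.filter (fun C => (C ∩ (I ∩ Jᶜ)).card = 1), s I := by
            have inner : ∀ A : Finset (Fin n),
                (∑ C ∈ 𝒞, if ((A ∩ (I ∩ J)).card = 1) then
                  (if ((C ∩ (I ∩ Jᶜ)).card = 1) then s I else 0) else 0)
                = if ((A ∩ (I ∩ J)).card = 1) then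
                    (∑ C ∈ 𝒞.filter (fun C => (C ∩ (I ∩ Jᶜ)).card = 1), s I) else 0 := by
              intro A
              by_cases hqA : (A ∩ (I ∩ J)).card = 1
              · rw [if_pos hqA]
                conv_rhs => rw [Finset.sum_filter]
                exact Finset.sum_congr rfl fun C _ => if_pos hqA
              · rw [if_neg hqA]
                exact Finset.sum_eq_zero fun C hC => if_neg hqA
            calc (∑ A ∈ 𝒜, ∑ C ∈ 𝒞, if ((A ∩ (I ∩ J)).card = 1) then
                  (if ((C ∩ (I ∩ Jᶜ)).card = 1) then s I else 0) else 0)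
                = ∑ A ∈ 𝒜, if ((A ∩ (I ∩ J)).card = 1) then
                    (∑ C ∈ 𝒞.filter (fun C => (C ∩ (I ∩ Jᶜ)).card = 1), s I) else 0 :=
                  Finset.sum_congr rfl fun A _ => inner A
              _ = ∑ A ∈ 𝒜.filter (fun A => (A ∩ (I ∩ J)).card = 1),
                    ∑ C ∈ 𝒞.filter (fun C => (C ∩ (I ∩ Jᶜ)).card = 1), s I := by
                  conv_rhs => rw [Finset.sum_filter]
        _ = (c : ℚ) * s I := by
            rw [Finset.sum_const, Finset.sum_const, hCcount, hAcount, hc]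
            simp only [nsmul_eq_mul]
            push_cast
            ring
        _ = (c : ℚ) * (if I.card = 4 ∧ (I ∩ J).card = 2 then s I else 0) := by
            rw [if_pos ⟨h4, h2⟩]
    · -- all conditions false
      have hfalse : ∀ A ∈ 𝒜, ∀ C ∈ 𝒞, ¬ (I.card = 4 ∧ (I ∩ A).card = 1 ∧
          (I ∩ (J \ A)).card = 1 ∧ (I ∩ C).card = 1 ∧ (I ∩ (Jᶜ \ C)).card = 1) := by
        rintro A hA C hC ⟨h4, hA1, hA2, _, _⟩
        simp only [h𝒜, mem_filter, mem_powerset] at hA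
        have h2 : (I ∩ J).card = 2 := by
          have hu : I ∩ J = (I ∩ A) ∪ (I ∩ (J \ A)) := by
            rw [← Finset.inter_union_distrib_left, union_sdiff_of_subset hA.1]
          have hd : Disjoint (I ∩ A) (I ∩ (J \ A)) :=
            disjoint_sdiff.mono inter_subset_right inter_subset_right
          rw [hu, Finset.card_union_of_disjoint hd, hA1, hA2]
        exact hI ⟨h4, h2⟩
      rw [if_neg hI, mul_zero]
      refine Finset.sum_eq_zero fun A hA => Finset.sum_eq_zero fun C hC => ?_
      rw [if_neg (hfalse A hA C hC)]
  -- assemble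
  have compute : (∑ A ∈ 𝒜, ∑ C ∈ 𝒞, ∑ I ∈ univ.filter (fun I : Finset (Fin n) =>
      I.card = 4 ∧ (I ∩ A).card = 1 ∧ (I ∩ (J \ A)).card = 1 ∧
      (I ∩ C).card = 1 ∧ (I ∩ (Jᶜ \ C)).card = 1), s I)
      = (c : ℚ) * ∑ I ∈ univ.filter (fun I : Finset (Fin n) =>
          I.card = 4 ∧ (I ∩ J).card = 2), s I := by
    calc (∑ A ∈ 𝒜, ∑ C ∈ 𝒞, ∑ I ∈ univ.filter (fun I : Finset (Fin n) =>
          I.card = 4 ∧ (I ∩ A).card = 1 ∧ (I ∩ (J \ A)).card = 1 ∧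
          (I ∩ C).card = 1 ∧ (I ∩ (Jᶜ \ C)).card = 1), s I)
        = ∑ A ∈ 𝒜, ∑ C ∈ 𝒞, ∑ I ∈ (univ : Finset (Finset (Fin n))),
            if (I.card = 4 ∧ (I ∩ A).card = 1 ∧ (I ∩ (J \ A)).card = 1 ∧
              (I ∩ C).card = 1 ∧ (I ∩ (Jᶜ \ C)).card = 1) then s I else 0 :=
          Finset.sum_congr rfl fun A _ => Finset.sum_congr rfl fun C _ =>
            Finset.sum_filter _ _
      _ = ∑ I ∈ (univ : Finset (Finset (Fin n))), ∑ A ∈ 𝒜, ∑ C ∈ 𝒞,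
            if (I.card = 4 ∧ (I ∩ A).card = 1 ∧ (I ∩ (J \ A)).card = 1 ∧
              (I ∩ C).card = 1 ∧ (I ∩ (Jᶜ \ C)).card = 1) then s I else 0 := by
          rw [show (∑ A ∈ 𝒜, ∑ C ∈ 𝒞, ∑ I ∈ (univ : Finset (Finset (Fin n))),
              if (I.card = 4 ∧ (I ∩ A).card = 1 ∧ (I ∩ (J \ A)).card = 1 ∧
                (I ∩ C).card = 1 ∧ (I ∩ (Jᶜ \ C)).card = 1) then s I else 0)
              = ∑ A ∈ 𝒜, ∑ I ∈ (univ : Finset (Finset (Fin n))), ∑ C ∈ 𝒞,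
              if (I.card = 4 ∧ (I ∩ A).card = 1 ∧ (I ∩ (J \ A)).card = 1 ∧
                (I ∩ C).card = 1 ∧ (I ∩ (Jᶜ \ C)).card = 1) then s I else 0
              from Finset.sum_congr rfl fun A _ => Finset.sum_comm]
          exact Finset.sum_comm
      _ = ∑ I ∈ (univ : Finset (Finset (Fin n))),
            (c : ℚ) * (if I.card = 4 ∧ (I ∩ J).card = 2 then s I else 0) :=
          Finset.sum_congr rfl fun I _ => perI I
      _ = (c : ℚ) * ∑ I ∈ univ.filter (fun I : Finset (Fin n) =>
            I.card = 4 ∧ (I ∩ J).card = 2), s I := by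
          rw [← Finset.mul_sum, Finset.sum_filter]
  rw [compute] at total
  have hcpos : (0 : ℚ) < (c : ℚ) := by
    have : 0 < c := by positivity
    exact_mod_cast this
  nlinarith [total, hcpos]
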